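/- Let A, B ∈ ℝ^{n×n}, with det B > 0 and ‖B‖ⁿ ≤ Q · det B for the operator norm ‖·‖ and some Q ≥ 1. Then |A·B| ≥ Q^{-1} · |A| · |B| / n², where |·| denotes the Frobenius norm. -/

import Mathlib

open Matrix MeasureTheory

noncomputable def msqrt {n : ℕ} (A : Matrix (Fin n) (Fin n) ℝ) : Matrix (Fin n) (Fin n) ℝ :=
  let hA := (Matrix.posSemidef_conjTranspose_mul_self A).1
  (hA.eigenvectorUnitary : Matrix (Fin n) (Fin n) ℝ) * diagonal ((fun x : ℝ => √x) ∘ hA.eigenvalues) *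
    (star hA.eigenvectorUnitary : Matrix (Fin n) (Fin n) ℝ)

noncomputable def frobNorm {n : ℕ} (A : Matrix (Fin n) (Fin n) ℝ) : ℝ :=
  Real.sqrt (∑ i, ∑ j, (A i j) ^ 2)

noncomputable def opNorm {n : ℕ} (A : Matrix (Fin n) (Fin n) ℝ) : ℝ :=
  ‖Matrix.toEuclideanCLM (𝕜 := ℝ) A‖

noncomputable def sLam {n : ℕ} (A : Matrix (Fin n) (Fin n) ℝ) : ℝ :=
  sInf {y | ∃ v : EuclideanSpace ℝ (Fin n), ‖v‖ = 1 ∧ y = ‖Matrix.toEuclideanCLM (𝕜 := ℝ) A v‖}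

section AuxLemmas

lemma aux_ct {n : ℕ} (C : Matrix (Fin n) (Fin n) ℝ) : Cᴴ = Cᵀ :=
  Matrix.ext fun _ _ => star_trivial _

lemma aux_clm_apply {n : ℕ} (C : Matrix (Fin n) (Fin n) ℝ) (x : EuclideanSpace ℝ (Fin n)) :
    ⇑(Matrix.toEuclideanCLM (𝕜 := ℝ) C x) = C *ᵥ ⇑x := by
  simp [Matrix.ofLp_toEuclideanCLM]

lemma aux_dot_self {n : ℕ} (x : EuclideanSpace ℝ (Fin n)) : (⇑x : Fin n → ℝ) ⬝ᵥ ⇑x = ‖x‖^2 := by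
  rw [EuclideanSpace.norm_eq, Real.sq_sqrt (by positivity)]
  simp [dotProduct, sq]

lemma aux_mulVec_dot_le {n : ℕ} (C : Matrix (Fin n) (Fin n) ℝ) (x : EuclideanSpace ℝ (Fin n)) :
    (C *ᵥ ⇑x) ⬝ᵥ (C *ᵥ ⇑x) ≤ opNorm C ^ 2 * ‖x‖ ^ 2 := by
  have h1 : (C *ᵥ ⇑x) = ⇑(Matrix.toEuclideanCLM (𝕜 := ℝ) C x) := (aux_clm_apply C x).symm
  rw [h1, aux_dot_self]
  have := (Matrix.toEuclideanCLM (𝕜 := ℝ) C).le_opNorm x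
  calc ‖Matrix.toEuclideanCLM (𝕜 := ℝ) C x‖ ^ 2 ≤ (opNorm C * ‖x‖)^2 :=
        pow_le_pow_left₀ (norm_nonneg _) this 2
    _ = opNorm C ^2 * ‖x‖^2 := by ring

lemma aux_opnorm_transpose {n : ℕ} (C : Matrix (Fin n) (Fin n) ℝ) : opNorm Cᵀ = opNorm C := by
  have h : Cᵀ = star C := (aux_ct C).symm
  rw [opNorm, h, map_star, ContinuousLinearMap.star_eq_adjoint,
    LinearIsometryEquiv.norm_map ContinuousLinearMap.adjoint]
  rfl

lemma aux_eig_le {n : ℕ} (B : Matrix (Fin n) (Fin n) ℝ)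
    (hM : (B * Bᵀ).IsHermitian) (i : Fin n) : hM.eigenvalues i ≤ opNorm B ^ 2 := by
  have hv : ‖hM.eigenvectorBasis i‖ = 1 := hM.eigenvectorBasis.orthonormal.1 i
  have he := hM.eigenvalues_eq i
  set v : Fin n → ℝ := ⇑(hM.eigenvectorBasis i) with hvdef
  have h1 : hM.eigenvalues i = v ⬝ᵥ ((B * Bᵀ) *ᵥ v) := by
    simpa using he
  have h2 : v ⬝ᵥ ((B * Bᵀ) *ᵥ v) = (Bᵀ *ᵥ v) ⬝ᵥ (Bᵀ *ᵥ v) := by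
    rw [← Matrix.mulVec_mulVec, Matrix.dotProduct_mulVec, ← Matrix.mulVec_transpose]
  rw [h1, h2]
  have := aux_mulVec_dot_le Bᵀ (hM.eigenvectorBasis i)
  rw [hv, aux_opnorm_transpose] at this
  simpa using this

lemma aux_qf_ge {n : ℕ} (M : Matrix (Fin n) (Fin n) ℝ) (hM : M.IsHermitian) (t : ℝ)
    (ht : ∀ i, t ≤ hM.eigenvalues i) (x : Fin n → ℝ) :
    t * (x ⬝ᵥ x) ≤ x ⬝ᵥ (M *ᵥ x) := by
  set U : Matrix (Fin n) (Fin n) ℝ := (hM.eigenvectorUnitary : Matrix (Fin n) (Fin n) ℝ) with hU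
  have hstar : star U = Uᵀ := aux_ct U
  have hunit : U * Uᵀ = 1 := by
    rw [← hstar]; exact (Matrix.mem_unitaryGroup_iff).mp hM.eigenvectorUnitary.2
  have hdiag : (RCLike.ofReal ∘ hM.eigenvalues : Fin n → ℝ) = hM.eigenvalues := by
    funext i; simp
  have hspec : M = U * Matrix.diagonal hM.eigenvalues * Uᵀ := by
    have := hM.spectral_theorem
    rwa [Unitary.conjStarAlgAut_apply, hstar, hdiag] at this
  set y : Fin n → ℝ := Uᵀ *ᵥ x with hy
  have hyx : x ⬝ᵥ (M *ᵥ x) = y ⬝ᵥ (Matrix.diagonal hM.eigenvalues *ᵥ y) := by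
    conv_lhs => rw [hspec]
    rw [← Matrix.mulVec_mulVec, Matrix.dotProduct_mulVec, ← Matrix.mulVec_transpose,
      Matrix.transpose_mul, Matrix.diagonal_transpose, ← Matrix.mulVec_mulVec,
      dotProduct_comm]
  have hyy : y ⬝ᵥ y = x ⬝ᵥ x := by
    rw [hy, Matrix.dotProduct_mulVec (Uᵀ *ᵥ x) Uᵀ x, ← Matrix.mulVec_transpose,
      Matrix.transpose_transpose, Matrix.mulVec_mulVec, hunit, Matrix.one_mulVec]
  rw [hyx, ← hyy]
  simp only [dotProduct, Matrix.mulVec_diagonal, Finset.mul_sum]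
  apply Finset.sum_le_sum
  intro i _
  have : t * (y i * y i) ≤ hM.eigenvalues i * (y i * y i) :=
    mul_le_mul_of_nonneg_right (ht i) (mul_self_nonneg _)
  nlinarith [this]

lemma aux_row_qf {n : ℕ} (B : Matrix (Fin n) (Fin n) ℝ) (a : Fin n → ℝ) :
    ∑ j, (∑ k, a k * B k j)^2 = a ⬝ᵥ ((B * Bᵀ) *ᵥ a) := by
  calc ∑ j, (∑ k, a k * B k j)^2
      = ∑ j, ∑ k, ∑ l, (a k * B k j) * (a l * B l j) := by
        refine Finset.sum_congr rfl fun j _ => ?_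
        rw [sq, Finset.sum_mul_sum]
    _ = ∑ k, ∑ l, ∑ j, (a k * B k j) * (a l * B l j) := by
        rw [Finset.sum_comm]
        exact Finset.sum_congr rfl fun k _ => Finset.sum_comm
    _ = a ⬝ᵥ ((B * Bᵀ) *ᵥ a) := by
        simp only [dotProduct, Matrix.mulVec, dotProduct, Matrix.mul_apply,
          Matrix.transpose_apply, Finset.mul_sum, Finset.sum_mul]
        refine Finset.sum_congr rfl fun k _ => ?_
        refine Finset.sum_congr rfl fun l _ => Finset.sum_congr rfl fun j _ => by ring

lemma aux_col {n : ℕ} (B : Matrix (Fin n) (Fin n) ℝ) (j : Fin n) :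
    ∑ i, (B i j)^2 = (B *ᵥ Pi.single j 1) ⬝ᵥ (B *ᵥ Pi.single j 1) := by
  simp [Matrix.mulVec_single, dotProduct, sq]

end AuxLemmas

set_option maxHeartbeats 1000000 in
/-- Matrices of bounded dilatation cannot collapse the Frobenius norm of products
by more than a factor Q·n². -/
theorem stmt_4 {n : ℕ} (A B : Matrix (Fin n) (Fin n) ℝ) (Q : ℝ) (hQ : 1 ≤ Q)
    (hdet : 0 < B.det) (h : opNorm B ^ n ≤ Q * B.det) :
    Q⁻¹ * frobNorm A * frobNorm B / n ^ 2 ≤ frobNorm (A * B) := by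
  rcases Nat.eq_zero_or_pos n with hn | hn
  · subst hn
    simp [frobNorm, Real.sqrt_nonneg]
  have hQpos : 0 < Q := lt_of_lt_of_le one_pos hQ
  set σ : ℝ := opNorm B with hσdef
  have hσ0 : 0 ≤ σ := norm_nonneg _
  have hne : Nonempty (Fin n) := Fin.pos_iff_nonempty.mp hn
  -- σ > 0
  have hσpos : 0 < σ := by
    rcases hσ0.lt_or_eq with h' | h'
    · exact h'
    · exfalso
      have hB0 : B = 0 := by
        have h0 : Matrix.toEuclideanCLM (𝕜 := ℝ) B = 0 := norm_eq_zero.mp h'.symm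
        have := congrArg (Matrix.toEuclideanCLM (𝕜 := ℝ)).symm h0
        simpa using this
      rw [hB0, Matrix.det_zero] at hdet
      exact lt_irrefl _ hdet
  -- PSD matrix M = B * Bᵀ
  have hPSD : (B * Bᵀ).PosSemidef := by
    have := Matrix.posSemidef_self_mul_conjTranspose B
    rwa [aux_ct] at this
  have hM : (B * Bᵀ).IsHermitian := hPSD.1
  have hμ0 : ∀ i, 0 ≤ hM.eigenvalues i := fun i => hPSD.eigenvalues_nonneg i
  have hμle : ∀ i, hM.eigenvalues i ≤ σ ^ 2 := fun i => aux_eig_le B hM i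
  -- minimal eigenvalue
  obtain ⟨i0, -, hi0⟩ := Finset.exists_min_image Finset.univ hM.eigenvalues Finset.univ_nonempty
  have hi0' : ∀ i, hM.eigenvalues i0 ≤ hM.eigenvalues i := fun i => hi0 i (Finset.mem_univ i)
  set μ0 : ℝ := hM.eigenvalues i0 with hμ0def
  -- product of eigenvalues = det B ^ 2
  have hprod : ∏ i, hM.eigenvalues i = B.det ^ 2 := by
    have := hM.det_eq_prod_eigenvalues
    have h2 : (B * Bᵀ).det = B.det ^ 2 := by
      rw [Matrix.det_mul, Matrix.det_transpose, sq]
    rw [h2] at this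
    simpa using this.symm
  -- det B ^ 2 ≤ μ0 * (σ^2)^(n-1)
  have hdetle : B.det ^ 2 ≤ μ0 * (σ ^ 2) ^ (n - 1) := by
    have e1 : ∏ i, hM.eigenvalues i
        = μ0 * ∏ i ∈ Finset.univ.erase i0, hM.eigenvalues i :=
      (Finset.mul_prod_erase Finset.univ hM.eigenvalues (Finset.mem_univ i0)).symm
    have e2 : ∏ i ∈ Finset.univ.erase i0, hM.eigenvalues i ≤ (σ ^ 2) ^ (n - 1) := by
      have hcard : (Finset.univ.erase i0).card = n - 1 := by
        rw [Finset.card_erase_of_mem (Finset.mem_univ i0), Finset.card_univ, Fintype.card_fin]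
      calc ∏ i ∈ Finset.univ.erase i0, hM.eigenvalues i
          ≤ ∏ _i ∈ Finset.univ.erase i0, σ ^ 2 :=
            Finset.prod_le_prod (fun i _ => hμ0 i) (fun i _ => hμle i)
        _ = (σ ^ 2) ^ (n - 1) := by rw [Finset.prod_const, hcard]
    calc B.det ^ 2 = μ0 * ∏ i ∈ Finset.univ.erase i0, hM.eigenvalues i := by
          rw [← hprod, e1]
      _ ≤ μ0 * (σ ^ 2) ^ (n - 1) := mul_le_mul_of_nonneg_left e2 (hμ0 i0)
  -- μ0 ≥ (σ/Q)^2
  have hμ0ge : (σ / Q) ^ 2 ≤ μ0 := by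
    have hP : 0 < (σ ^ 2) ^ (n - 1) := pow_pos (pow_pos hσpos 2) _
    have hnn : n - 1 + 1 = n := Nat.succ_pred_eq_of_pos hn
    have hpow : (σ ^ 2) ^ (n - 1) * σ ^ 2 = (σ ^ n) ^ 2 := by
      rw [← pow_succ, hnn, ← pow_mul, ← pow_mul, Nat.mul_comm]
    have h1 : (σ ^ n) ^ 2 ≤ (Q * B.det) ^ 2 :=
      pow_le_pow_left₀ (pow_nonneg hσ0 n) h 2
    have key : (σ / Q) ^ 2 * (σ ^ 2) ^ (n - 1) ≤ μ0 * (σ ^ 2) ^ (n - 1) := by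
      have e3 : (σ / Q) ^ 2 * (σ ^ 2) ^ (n - 1) = (σ ^ n) ^ 2 / Q ^ 2 := by
        rw [div_pow, div_mul_eq_mul_div, mul_comm, hpow]
      rw [e3]
      calc (σ ^ n) ^ 2 / Q ^ 2 ≤ (Q * B.det) ^ 2 / Q ^ 2 := by
            apply div_le_div_of_nonneg_right h1 (by positivity)
        _ = B.det ^ 2 := by field_simp
        _ ≤ μ0 * (σ ^ 2) ^ (n - 1) := hdetle
    exact le_of_mul_le_mul_right key hP
  -- Frobenius facts
  set fA : ℝ := frobNorm A with hfAdef
  set fB : ℝ := frobNorm B with hfBdef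
  set fAB : ℝ := frobNorm (A * B) with hfABdef
  have hfA0 : 0 ≤ fA := Real.sqrt_nonneg _
  have hfB0 : 0 ≤ fB := Real.sqrt_nonneg _
  have hfAB0 : 0 ≤ fAB := Real.sqrt_nonneg _
  have hfAsq : fA ^ 2 = ∑ i, ∑ j, (A i j) ^ 2 := Real.sq_sqrt (by positivity)
  have hfBsq : fB ^ 2 = ∑ i, ∑ j, (B i j) ^ 2 := Real.sq_sqrt (by positivity)
  have hfABsq : fAB ^ 2 = ∑ i, ∑ j, ((A * B) i j) ^ 2 := Real.sq_sqrt (by positivity)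
  -- lower bound on fAB^2
  have hlow : μ0 * fA ^ 2 ≤ fAB ^ 2 := by
    rw [hfABsq, hfAsq]
    have e1 : ∀ i : Fin n, ∑ j, ((A * B) i j) ^ 2
        = (fun k => A i k) ⬝ᵥ ((B * Bᵀ) *ᵥ fun k => A i k) := by
      intro i
      rw [← aux_row_qf]
      refine Finset.sum_congr rfl fun j _ => ?_
      rw [Matrix.mul_apply]
    have e2 : ∀ i : Fin n, ∑ j, (A i j) ^ 2 = (fun k => A i k) ⬝ᵥ (fun k => A i k) := by
      intro i; simp [dotProduct, sq]
    calc μ0 * ∑ i, ∑ j, (A i j) ^ 2 = ∑ i, μ0 * ((fun k => A i k) ⬝ᵥ fun k => A i k) := by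
          rw [Finset.mul_sum]
          exact Finset.sum_congr rfl fun i _ => by rw [e2 i]
      _ ≤ ∑ i, (fun k => A i k) ⬝ᵥ ((B * Bᵀ) *ᵥ fun k => A i k) :=
          Finset.sum_le_sum fun i _ => aux_qf_ge _ hM μ0 hi0' _
      _ = ∑ i, ∑ j, ((A * B) i j) ^ 2 :=
          (Finset.sum_congr rfl fun i _ => (e1 i)).symm
  -- fAB ≥ (σ/Q) * fA
  have hfABlow : σ / Q * fA ≤ fAB := by
    have h1 : (σ / Q * fA) ^ 2 ≤ fAB ^ 2 := by
      have : (σ / Q * fA) ^ 2 = (σ / Q) ^ 2 * fA ^ 2 := by ring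
      rw [this]
      calc (σ / Q) ^ 2 * fA ^ 2 ≤ μ0 * fA ^ 2 :=
            mul_le_mul_of_nonneg_right hμ0ge (by positivity)
        _ ≤ fAB ^ 2 := hlow
    have h2 := Real.sqrt_le_sqrt h1
    rwa [Real.sqrt_sq (by positivity), Real.sqrt_sq hfAB0] at h2
  -- fB ≤ n * σ
  have hfBle : fB ≤ n * σ := by
    have h1 : fB ^ 2 ≤ n * σ ^ 2 := by
      rw [hfBsq, Finset.sum_comm]
      calc ∑ j, ∑ i, (B i j) ^ 2 ≤ ∑ _j : Fin n, σ ^ 2 := by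
            refine Finset.sum_le_sum fun j _ => ?_
            rw [aux_col]
            have hcoe : ⇑(EuclideanSpace.single j (1:ℝ)) = Pi.single j (1:ℝ) := by
              simp only [EuclideanSpace.single, Equiv.apply_symm_apply, PiLp.ofLp_single]
            have hx := aux_mulVec_dot_le B (EuclideanSpace.single j (1:ℝ))
            rw [hcoe, EuclideanSpace.norm_single, norm_one, one_pow, mul_one] at hx
            exact hx
        _ = n * σ ^ 2 := by rw [Finset.sum_const, Finset.card_univ, Fintype.card_fin]; simp
    have h2 : fB ^ 2 ≤ (n * σ) ^ 2 := by
      calc fB ^ 2 ≤ n * σ ^ 2 := h1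
        _ ≤ (n * σ) ^ 2 := by
            have hn1 : (1 : ℝ) ≤ (n : ℝ) := by exact_mod_cast hn
            nlinarith [sq_nonneg σ]
    have h3 := Real.sqrt_le_sqrt h2
    rwa [Real.sqrt_sq hfB0, Real.sqrt_sq (by positivity)] at h3
  -- final chain
  have hn2pos : (0 : ℝ) < (n : ℝ) ^ 2 := by
    have : (0 : ℝ) < (n : ℝ) := by exact_mod_cast hn
    positivity
  rw [div_le_iff₀ hn2pos, mul_assoc, inv_mul_le_iff₀ hQpos]
  have hchain : σ * fA ≤ fAB * Q := by
    have := mul_le_mul_of_nonneg_right hfABlow (le_of_lt hQpos)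
    calc σ * fA = σ / Q * fA * Q := by field_simp
      _ ≤ fAB * Q := this
  have hn1 : (1 : ℝ) ≤ (n : ℝ) := by exact_mod_cast hn
  calc fA * fB ≤ fA * (n * σ) := mul_le_mul_of_nonneg_left hfBle hfA0
    _ = (n : ℝ) * (σ * fA) := by ring
    _ ≤ (n : ℝ) * (fAB * Q) := by
        apply mul_le_mul_of_nonneg_left hchain (by positivity)
    _ ≤ (n : ℝ) ^ 2 * (fAB * Q) := by
        have hnn2 : (n : ℝ) ≤ (n : ℝ) ^ 2 := by nlinarith
        exact mul_le_mul_of_nonneg_right hnn2 (mul_nonneg hfAB0 (le_of_lt hQpos))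
    _ = Q * (fAB * (n : ℝ) ^ 2) := by ring
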